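/- For battery capacities beyond the total load energy, the set of suitable starting times saturates: if E_bat ≥ Σ_{t'=0}^{T_a - 1} a(t')·Δt and a(t') ≥ 0 with P_wind ≥ 0, then the set of suitable starting times is the same as with infinite capacity (no cap), i.e., increasing E_bat further does not change suitability. -/
import Mathlib


/-- Capped battery level at time `ts + k`. -/
def batt (Pwind a : ℕ → ℝ) (Δt Ebat : ℝ) (ts : ℕ) : ℕ → ℝ
  | 0 => 0
  | k + 1 => min (batt Pwind a Δt Ebat ts k + (Pwind (ts + k) - a k) * Δt) Ebat

/-- Uncapped (infinite-capacity) battery level at time `ts + k`. -/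
def battInf (Pwind a : ℕ → ℝ) (Δt : ℝ) (ts : ℕ) : ℕ → ℝ
  | 0 => 0
  | k + 1 => battInf Pwind a Δt ts k + (Pwind (ts + k) - a k) * Δt

lemma batt_le_battInf (Pwind a : ℕ → ℝ) (Δt Ebat : ℝ) (ts : ℕ) :
    ∀ k, batt Pwind a Δt Ebat ts k ≤ battInf Pwind a Δt ts k := by
  intro k
  induction k with
  | zero => simp [batt, battInf]
  | succ n ih =>
    simp only [batt, battInf]
    exact le_trans (min_le_left _ _) (by linarith)

lemma min_le_batt (Pwind a : ℕ → ℝ) (Δt Ebat : ℝ) (ts : ℕ)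
    (hΔt : 0 < Δt) (hwind : ∀ t, 0 ≤ Pwind t) (ha : ∀ t', 0 ≤ a t') :
    ∀ k, min (battInf Pwind a Δt ts k)
        (Ebat - ∑ t' ∈ Finset.range k, a t' * Δt) ≤ batt Pwind a Δt Ebat ts k := by
  intro k
  induction k with
  | zero => simp [batt, battInf]
  | succ n ih =>
    simp only [batt, battInf, Finset.sum_range_succ]
    have hP : 0 ≤ Pwind (ts + n) * Δt := mul_nonneg (hwind _) hΔt.le
    have hA : 0 ≤ ∑ t' ∈ Finset.range (n+1), a t' * Δt :=
      Finset.sum_nonneg fun i _ => mul_nonneg (ha i) hΔt.le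
    rw [Finset.sum_range_succ] at hA
    have hd : (Pwind (ts + n) - a n) * Δt = Pwind (ts + n) * Δt - a n * Δt := by ring
    rcases le_or_gt (battInf Pwind a Δt ts n)
        (Ebat - ∑ t' ∈ Finset.range n, a t' * Δt) with h | h
    · rw [min_eq_left h] at ih
      refine le_min ?_ ?_
      · exact (min_le_left _ _).trans (by linarith)
      · exact (min_le_right _ _).trans (by linarith)
    · rw [min_eq_right h.le] at ih
      refine le_min ?_ ?_
      · exact (min_le_right _ _).trans (by linarith)
      · exact (min_le_right _ _).trans (by linarith)

/-- Once the capacity exceeds the total load energy, suitability is the same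
as with infinite capacity: increasing the battery further changes nothing. -/
theorem stmt_19 (Pwind a : ℕ → ℝ) (Δt Ebat : ℝ) (hΔt : 0 < Δt) (Ta : ℕ)
    (hwind : ∀ t, 0 ≤ Pwind t) (ha : ∀ t', 0 ≤ a t')
    (hsupp : ∀ t', Ta ≤ t' → a t' = 0)
    (hEbat : ∑ t' ∈ Finset.range Ta, a t' * Δt ≤ Ebat) (ts : ℕ) :
    ((∀ k ≤ Ta, 0 ≤ batt Pwind a Δt Ebat ts k) ↔
      (∀ k ≤ Ta, 0 ≤ battInf Pwind a Δt ts k)) := by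
  constructor
  · intro h k hk
    exact (h k hk).trans (batt_le_battInf Pwind a Δt Ebat ts k)
  · intro h k hk
    refine le_trans ?_ (min_le_batt Pwind a Δt Ebat ts hΔt hwind ha k)
    refine le_min (h k hk) ?_
    have hsub : ∑ t' ∈ Finset.range k, a t' * Δt ≤ ∑ t' ∈ Finset.range Ta, a t' * Δt :=
      Finset.sum_le_sum_of_subset_of_nonneg
        (Finset.range_subset_range.2 hk)
        (fun i _ _ => mul_nonneg (ha i) hΔt.le)
    linarith
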